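/- Let κ > 0 and take ρ = (κ−4)/2. On {(x,y) ∈ ℝ² : x > y}, the function Λ(x,y) = (x−y)^{(κ−4)/(2κ)} log(x−y) satisfies A_{κ;(κ−4)/2} Λ = 0; moreover (∂/∂x + ∂/∂y)Λ = 0 and (x ∂/∂x + y ∂/∂y)Λ + (h_{1,2}(κ) + h((κ−4)/2))Λ = ((8−κ)/16)·Λ + Z, where Z(x,y) = (x−y)^{(κ−4)/(2κ)}, h_{1,2}(κ) = (6−κ)/(2κ) and h(ρ) = ρ(ρ+4−κ)/(4κ). In other words, Λ is a logarithmic partner of Z forming an L₀ Jordan block at eigenvalue (8−κ)/16. -/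

import Mathlib

/-- The SLE_κ(ρ=(κ-4)/2) partition function. -/
noncomputable def Z5 (κ x y : ℝ) : ℝ := (x - y) ^ ((κ - 4) / (2 * κ))

/-- The logarithmic partner of `Z5`. -/
noncomputable def Λ5 (κ x y : ℝ) : ℝ := (x - y) ^ ((κ - 4) / (2 * κ)) * Real.log (x - y)

lemma hasDeriv_plog (a : ℝ) {t : ℝ} (ht : 0 < t) :
    HasDerivAt (fun s : ℝ => s ^ a * Real.log s)
      (a * t ^ (a - 1) * Real.log t + t ^ (a - 1)) t := by
  have h1 := Real.hasDerivAt_rpow_const (x := t) (p := a) (Or.inl ht.ne')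
  have h2 := Real.hasDerivAt_log ht.ne'
  have := h1.mul h2
  refine this.congr_deriv ?_
  rw [Real.rpow_sub ht, Real.rpow_one]
  field_simp

lemma hasDeriv_g (a : ℝ) {t : ℝ} (ht : 0 < t) :
    HasDerivAt (fun s : ℝ => a * s ^ (a - 1) * Real.log s + s ^ (a - 1))
      (a * ((a - 1) * t ^ (a - 2) * Real.log t + t ^ (a - 2))
        + (a - 1) * t ^ (a - 2)) t := by
  have h1 := ((hasDeriv_plog (a - 1) ht).const_mul a)
  have h2 := Real.hasDerivAt_rpow_const (x := t) (p := a - 1) (Or.inl ht.ne')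
  have := h1.add h2
  have e : a - 1 - 1 = a - 2 := by ring
  rw [e] at this
  refine this.congr_of_eventuallyEq (Filter.Eventually.of_forall fun s => ?_)
  simp only [Pi.add_apply]
  ring

theorem stmt_5 (κ : ℝ) (hκ : 0 < κ) (ρ : ℝ) (hρ : ρ = (κ - 4) / 2) :
    ∀ x y : ℝ, y < x →
      (κ / 2 * deriv (fun x' => deriv (fun x'' => Λ5 κ x'' y) x') x
          + 2 / (y - x) * deriv (fun y' => Λ5 κ x y') y
          - ρ * (ρ + 4 - κ) / (2 * κ) / (y - x) ^ 2 * Λ5 κ x y = 0)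
      ∧ (deriv (fun x' => Λ5 κ x' y) x + deriv (fun y' => Λ5 κ x y') y = 0)
      ∧ (x * deriv (fun x' => Λ5 κ x' y) x + y * deriv (fun y' => Λ5 κ x y') y
          + ((6 - κ) / (2 * κ) + ρ * (ρ + 4 - κ) / (4 * κ)) * Λ5 κ x y
          = (8 - κ) / 16 * Λ5 κ x y + Z5 κ x y) := by
  intro x y hxy
  set a := (κ - 4) / (2 * κ) with ha
  have ht : (0:ℝ) < x - y := by linarith
  -- first x-derivative
  have hDx : HasDerivAt (fun x' => Λ5 κ x' y)
      ((a * (x - y) ^ (a - 1) * Real.log (x - y) + (x - y) ^ (a - 1)) * 1) x := by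
    exact (hasDeriv_plog a ht).comp x ((hasDerivAt_id x).sub_const y)
  -- y-derivative
  have hDy : HasDerivAt (fun y' => Λ5 κ x y')
      ((a * (x - y) ^ (a - 1) * Real.log (x - y) + (x - y) ^ (a - 1)) * (-1)) y := by
    have hin : HasDerivAt (fun y' : ℝ => x - y') (-1) y := by
      simpa using ((hasDerivAt_id y).const_sub x)
    exact (hasDeriv_plog a ht).comp y hin
  -- second x-derivative
  have hev : (fun x' => deriv (fun x'' => Λ5 κ x'' y) x')
      =ᶠ[nhds x] (fun x' => a * (x' - y) ^ (a - 1) * Real.log (x' - y) + (x' - y) ^ (a - 1)) := by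
    filter_upwards [eventually_gt_nhds hxy] with x' hx'
    have ht' : (0:ℝ) < x' - y := by linarith
    have : HasDerivAt (fun x'' => Λ5 κ x'' y)
        ((a * (x' - y) ^ (a - 1) * Real.log (x' - y) + (x' - y) ^ (a - 1)) * 1) x' :=
      by exact (hasDeriv_plog a ht').comp x' ((hasDerivAt_id x').sub_const y)
    simpa using this.deriv
  have hD2 : deriv (fun x' => deriv (fun x'' => Λ5 κ x'' y) x') x
      = (a * ((a - 1) * (x - y) ^ (a - 2) * Real.log (x - y) + (x - y) ^ (a - 2))
        + (a - 1) * (x - y) ^ (a - 2)) * 1 := by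
    rw [hev.deriv_eq]
    exact (((hasDeriv_g a ht).comp x ((hasDerivAt_id x).sub_const y))).deriv
  rw [hD2, hDx.deriv, hDy.deriv]
  have e1 : (x - y) ^ (a - 1) = (x - y) ^ a / (x - y) := by
    rw [Real.rpow_sub ht, Real.rpow_one]
  have e2 : (x - y) ^ (a - 2) = (x - y) ^ a / (x - y) ^ 2 := by
    rw [show a - 2 = a - (2:ℕ) by norm_num, Real.rpow_sub ht, Real.rpow_natCast]
  rw [e1, e2]
  simp only [Λ5, Z5, ← ha]
  have hyx : y - x = -(x - y) := by ring
  rw [hyx]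
  have h0 : x - y ≠ 0 := ht.ne'
  have hk : κ ≠ 0 := hκ.ne'
  subst hρ
  have hxy3 : ∀ F : ℝ, x * (F * 1) + y * (F * -1) = (x - y) * F := fun F => by ring
  rw [hxy3]
  generalize (x - y) ^ a = A
  generalize Real.log (x - y) = L
  generalize h0 : x - y = t at h0 ⊢
  rw [ha]
  refine ⟨by field_simp; ring, by ring, by field_simp; ring⟩
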